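/- Let H be a real Hilbert space and T : H → H be Lipschitz continuous with constant L and strongly monotone with constant m > 0 (i.e., ⟨T u - T v, u - v⟩ ≥ m·‖u - v‖² for all u, v). Then T is bijective and its inverse T⁻¹ : H → H is Lipschitz continuous with constant 1/m. -/

import Mathlib

theorem stmt_6 {H : Type*} [NormedAddCommGroup H] [InnerProductSpace ℝ H] [CompleteSpace H]
    (T : H → H) (L : NNReal) (m : ℝ) (hm : 0 < m) (hLip : LipschitzWith L T)
    (hmono : ∀ u v : H, m * ‖u - v‖ ^ 2 ≤ (inner ℝ (T u - T v) (u - v) : ℝ)) :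
    Function.Bijective T ∧
      ∀ u v : H, ‖Function.invFun T u - Function.invFun T v‖ ≤ (1 / m) * ‖u - v‖ := by
  -- Injectivity
  have hinj : Function.Injective T := by
    intro a b hab
    have h1 := hmono a b
    rw [hab, sub_self] at h1
    simp [inner_zero_left] at h1
    have h2 : ‖a - b‖ ^ 2 ≤ 0 := by
      by_contra hc
      push_neg at hc
      nlinarith [mul_pos hm hc]
    have h3 : ‖a - b‖ = 0 := by nlinarith [norm_nonneg (a - b), sq_nonneg (‖a - b‖)]
    exact norm_sub_eq_zero_iff.mp h3
  -- Surjectivity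
  have hsurj : Function.Surjective T := by
    rcases subsingleton_or_nontrivial H with hs | hs
    · intro y; exact ⟨y, Subsingleton.elim _ _⟩
    · -- m ≤ L, L > 0
      obtain ⟨u, v, huv⟩ := exists_pair_ne H
      have hnuv : (0:ℝ) < ‖u - v‖ := by
        rwa [norm_pos_iff, sub_ne_zero]
      have hmL : m ≤ (L:ℝ) := by
        have h1 := hmono u v
        have h2 : (inner ℝ (T u - T v) (u - v) : ℝ) ≤ ‖T u - T v‖ * ‖u - v‖ :=
          real_inner_le_norm _ _
        have h3 : ‖T u - T v‖ ≤ (L:ℝ) * ‖u - v‖ := by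
          simpa [dist_eq_norm] using hLip.dist_le_mul u v
        nlinarith [mul_le_mul_of_nonneg_right h3 (norm_nonneg (u - v)), mul_pos hnuv hnuv]
      have hL : (0:ℝ) < (L:ℝ) := lt_of_lt_of_le hm hmL
      intro y
      set θ : ℝ := m / (L:ℝ)^2 with hθdef
      have hθ : 0 < θ := div_pos hm (by positivity)
      set F : H → H := fun x => x - θ • (T x - y) with hF
      set C : ℝ := 1 - m^2 / (L:ℝ)^2 with hC
      have hC0 : 0 ≤ C := by
        rw [hC]
        have : m^2 ≤ (L:ℝ)^2 := by nlinarith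
        have := div_le_one_of_le₀ this (by positivity)
        linarith
      have hC1 : C < 1 := by
        rw [hC]
        have : 0 < m^2 / (L:ℝ)^2 := by positivity
        linarith
      -- F is a contraction with constant sqrt C
      set k : ℝ := Real.sqrt C with hk
      have hk0 : 0 ≤ k := Real.sqrt_nonneg _
      have hk1 : k < 1 := by
        rw [hk]
        calc Real.sqrt C < Real.sqrt 1 := by
              apply Real.sqrt_lt_sqrt hC0 hC1
          _ = 1 := Real.sqrt_one
      have hlip : ∀ x x', ‖F x - F x'‖ ≤ k * ‖x - x'‖ := by
        intro x x'
        have key : ‖F x - F x'‖^2 ≤ C * ‖x - x'‖^2 := by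
          have hFx : F x - F x' = (x - x') - θ • (T x - T x') := by
            simp only [hF]
            module
          rw [hFx]
          have hns : ‖(x - x') - θ • (T x - T x')‖^2
              = ‖x - x'‖^2 - 2 * inner ℝ (x - x') (θ • (T x - T x')) + ‖θ • (T x - T x')‖^2 := by
            rw [norm_sub_sq_real]
          rw [hns]
          have hin : (inner ℝ (x - x') (θ • (T x - T x')) : ℝ)
              = θ * inner ℝ (T x - T x') (x - x') := by
            rw [real_inner_smul_right, real_inner_comm]
          have hnsm : ‖θ • (T x - T x')‖^2 = θ^2 * ‖T x - T x'‖^2 := by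
            rw [norm_smul]
            simp [abs_of_pos hθ]
            ring
          rw [hin, hnsm]
          have hmon := hmono x x'
          have hTd : ‖T x - T x'‖ ≤ (L:ℝ) * ‖x - x'‖ := by
            simpa [dist_eq_norm] using hLip.dist_le_mul x x'
          have hTd2 : ‖T x - T x'‖^2 ≤ (L:ℝ)^2 * ‖x - x'‖^2 := by
            nlinarith [norm_nonneg (T x - T x'), norm_nonneg (x - x')]
          set s := ‖x - x'‖^2 with hs
          set r : ℝ := m^2 / (L:ℝ)^2 with hr
          have hs0 : 0 ≤ s := sq_nonneg _
          have hθm : θ * m = r := by rw [hθdef, hr]; field_simp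
          have hθL : θ^2 * (L:ℝ)^2 = r := by rw [hθdef, hr]; field_simp
          have hA : θ^2 * ‖T x - T x'‖^2 ≤ r * s := by
            calc θ^2 * ‖T x - T x'‖^2 ≤ θ^2 * ((L:ℝ)^2 * s) := by
                  apply mul_le_mul_of_nonneg_left hTd2 (sq_nonneg θ)
              _ = r * s := by rw [← hθL]; ring
          have hB : 2 * r * s ≤ 2 * (θ * (inner ℝ (T x - T x') (x - x') : ℝ)) := by
            have := mul_le_mul_of_nonneg_left hmon (le_of_lt hθ)
            nlinarith [hθm]
          have hCr : C = 1 - r := by rw [hC, hr]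
          rw [hCr]
          linarith
        have h1 : ‖F x - F x'‖ = Real.sqrt (‖F x - F x'‖^2) := by
          rw [Real.sqrt_sq (norm_nonneg _)]
        rw [h1]
        calc Real.sqrt (‖F x - F x'‖^2) ≤ Real.sqrt (C * ‖x - x'‖^2) :=
              Real.sqrt_le_sqrt key
          _ = k * ‖x - x'‖ := by
              rw [Real.sqrt_mul hC0, Real.sqrt_sq (norm_nonneg _)]
      have hcontr : ContractingWith ⟨k, hk0⟩ F := by
        constructor
        · exact_mod_cast hk1
        · apply LipschitzWith.of_dist_le_mul
          intro x x'
          rw [dist_eq_norm, dist_eq_norm]; exact hlip x x'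
      have : Nonempty H := ⟨0⟩
      obtain ⟨x, hx⟩ := hcontr.exists_fixedPoint 0 (edist_ne_top _ _)
      obtain ⟨hfix, -⟩ := hx
      refine ⟨x, ?_⟩
      have : x - θ • (T x - y) = x := hfix
      have h0 : θ • (T x - y) = 0 := by
        have := sub_eq_self.mp this
        exact this
      have := smul_eq_zero.mp h0
      rcases this with h | h
      · exact absurd h (ne_of_gt hθ)
      · exact sub_eq_zero.mp h
  have hbij : Function.Bijective T := ⟨hinj, hsurj⟩
  refine ⟨hbij, ?_⟩
  intro u v
  have hri : Function.RightInverse (Function.invFun T) T :=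
    Function.rightInverse_invFun hsurj
  set a := Function.invFun T u
  set b := Function.invFun T v
  have ha : T a = u := hri u
  have hb : T b = v := hri v
  have h1 := hmono a b
  rw [ha, hb] at h1
  have h2 : (inner ℝ (u - v) (a - b) : ℝ) ≤ ‖u - v‖ * ‖a - b‖ := real_inner_le_norm _ _
  have h3 : m * ‖a - b‖ ≤ ‖u - v‖ := by
    rcases eq_or_lt_of_le (norm_nonneg (a - b)) with h | h
    · rw [← h]; simp [norm_nonneg]
    · nlinarith
  rw [div_mul_eq_mul_div, le_div_iff₀ hm, one_mul]
  linarith [h3]
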